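/- Let w be a permutation of the positive integers fixing every j > n, and let 1 ≤ a ≤ n. Then ℓ(w·t_{a,n+1}) = ℓ(w) + 1 if and only if w(a) = max{ w(i) : a ≤ i ≤ n }, i.e. a is a position of a right-to-left maximum of (w(1),…,w(n)). -/
import Mathlib

/-- The inversion number of a permutation of `ℕ`. -/
noncomputable def invNum (w : Equiv.Perm ℕ) : ℕ :=
  {p : ℕ × ℕ | p.1 < p.2 ∧ w p.2 < w p.1}.ncard

open Finset

lemma invNum_eq_card (u : Equiv.Perm ℕ) (N : ℕ) (h : ∀ j, N < j → u j = j) :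
    invNum u = ((range (N+1) ×ˢ range (N+1)).filter
      (fun p => p.1 < p.2 ∧ u p.2 < u p.1)).card := by
  have hle : ∀ i, i ≤ N → u i ≤ N := by
    intro i hi
    by_contra hc
    push_neg at hc
    have h1 := h (u i) hc
    have h2 := u.injective h1
    omega
  have hset : {p : ℕ × ℕ | p.1 < p.2 ∧ u p.2 < u p.1} =
      ↑((range (N+1) ×ˢ range (N+1)).filter
        (fun p => p.1 < p.2 ∧ u p.2 < u p.1)) := by
    ext ⟨i, j⟩
    simp only [Set.mem_setOf_eq, coe_filter, mem_product, mem_range, Set.mem_setOf_eq]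
    constructor
    · rintro ⟨hij, hu⟩
      have hjN : j ≤ N := by
        by_contra hc
        push_neg at hc
        have hj := h j hc
        have hi : u i ≤ N ∨ u i = i := by
          by_cases hi : i ≤ N
          · exact Or.inl (hle i hi)
          · exact Or.inr (h i (by omega))
        omega
      exact ⟨⟨by omega, by omega⟩, hij, hu⟩
    · tauto
  rw [invNum, hset, Set.ncard_coe_finset]

/-- If `w` fixes every `j > n` and `1 ≤ a ≤ n`, then `ℓ(w·t_{a,n+1}) = ℓ(w) + 1`
iff `w a = max { w i : a ≤ i ≤ n }`, i.e. `a` is the position of a right-to-left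
maximum of `(w 1, …, w n)`. -/
theorem stmt_6 (n : ℕ) (w : Equiv.Perm ℕ) (hw0 : w 0 = 0)
    (hfix : ∀ j, n < j → w j = j)
    (a : ℕ) (ha1 : 1 ≤ a) (han : a ≤ n) :
    invNum (w * Equiv.swap a (n + 1)) = invNum w + 1 ↔
      ∀ i, a ≤ i → i ≤ n → w i ≤ w a := by
  set σ := Equiv.swap a (n + 1) with hσ
  set w' := w * σ with hw'def
  have hwle : ∀ i, i ≤ n → w i ≤ n := by
    intro i hi
    by_contra hc
    push_neg at hc
    have h1 := hfix (w i) hc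
    have h2 := w.injective h1
    omega
  have hσa : σ a = n + 1 := Equiv.swap_apply_left a (n+1)
  have hσn : σ (n+1) = a := Equiv.swap_apply_right a (n+1)
  have hσo : ∀ j, j ≠ a → j ≠ n+1 → σ j = j := fun j h1 h2 =>
    Equiv.swap_apply_of_ne_of_ne h1 h2
  have hw'app : ∀ j, w' j = w (σ j) := fun j => rfl
  have hw'a : w' a = n + 1 := by
    rw [hw'app, hσa, hfix (n+1) (by omega)]
  have hw'n : w' (n+1) = w a := by rw [hw'app, hσn]
  have hw'o : ∀ j, j ≠ a → j ≠ n+1 → w' j = w j := by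
    intro j h1 h2; rw [hw'app, hσo j h1 h2]
  have hfix' : ∀ j, n + 1 < j → w' j = j := by
    intro j hj
    rw [hw'o j (by omega) (by omega)]
    exact hfix j (by omega)
  -- counts per first coordinate
  set c : Equiv.Perm ℕ → ℕ → ℕ :=
    fun u i => ((Ioo i (n+2)).filter (fun j => u j < u i)).card with hc
  have hsum : ∀ u : Equiv.Perm ℕ,
      (((range (n+2) ×ˢ range (n+2)).filter
        (fun p => p.1 < p.2 ∧ u p.2 < u p.1)).card)
      = ∑ i ∈ range (n+2), c u i := by
    intro u
    rw [card_filter, Finset.sum_product]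
    refine Finset.sum_congr rfl fun i _ => ?_
    simp only [hc]
    rw [card_filter]
    rw [show (Ioo i (n+2) : Finset ℕ) = (range (n+2)).filter (fun j => i < j) from by
      ext j; simp only [mem_Ioo, mem_range, mem_filter]; omega]
    rw [Finset.sum_filter]
    exact Finset.sum_congr rfl fun j _ => by
      by_cases h1 : i < j <;> by_cases h2 : u j < u i <;> simp [h1, h2]
  -- key quantities
  set m := ((Ioc a n).filter (fun j => w a < w j)).card with hm
  set d : ℕ → ℕ := fun i => if i = a then m + 1
    else if a < i ∧ i ≤ n then (if w a < w i then 1 else 0) else 0 with hd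
  have hca : c w a + m = n - a := by
    have h1 : (Ioo a (n+2)).filter (fun j => w j < w a)
        = (Ioc a n).filter (fun j => w j < w a) := by
      ext j
      simp only [mem_filter, mem_Ioo, mem_Ioc]
      constructor
      · rintro ⟨⟨h1, h2⟩, h3⟩
        refine ⟨⟨h1, ?_⟩, h3⟩
        by_contra hcon
        have hj : j = n+1 := by omega
        subst hj
        rw [hfix (n+1) (by omega)] at h3
        have := hwle a han
        omega
      · rintro ⟨⟨h1, h2⟩, h3⟩
        exact ⟨⟨h1, by omega⟩, h3⟩
    have h2 : (Ioc a n).filter (fun j => ¬ w j < w a)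
        = (Ioc a n).filter (fun j => w a < w j) := by
      apply Finset.filter_congr
      intro j hj
      simp only [mem_Ioc] at hj
      have hne : w j ≠ w a := fun h => by
        have := w.injective h; omega
      constructor <;> intro <;> omega
    have h3 := Finset.card_filter_add_card_filter_not
      (s := Ioc a n) (p := fun j => w j < w a)
    rw [h2, Nat.card_Ioc, ← hm] at h3
    simp only [hc]
    rw [h1]
    exact h3
  have hca' : c w' a = n + 1 - a := by
    have hfull : (Ioo a (n+2)).filter (fun j => w' j < w' a) = Ioo a (n+2) := by
      apply Finset.filter_true_of_mem
      intro j hj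
      simp only [mem_Ioo] at hj
      rw [hw'a]
      rcases eq_or_ne j (n+1) with h | h
      · subst h
        rw [hw'n]
        have := hwle a han
        omega
      · rw [hw'o j (by omega) h]
        have := hwle j (by omega)
        omega
    simp only [hc]
    rw [hfull, Nat.card_Ioo]
    omega
  have hσσ : ∀ j, σ (σ j) = j := by
    intro j; simp [hσ]
  have hpt : ∀ i ∈ range (n+2), c w' i = c w i + d i := by
    intro i hi
    simp only [mem_range] at hi
    rcases lt_trichotomy i a with hia | hia | hia
    · -- i < a
      have hdi : d i = 0 := by
        simp only [hd]
        split_ifs <;> omega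
      rw [hdi, Nat.add_zero]
      have hwi' : w' i = w i := hw'o i (by omega) (by omega)
      have hσmem : ∀ j, j ∈ Ioo i (n+2) → σ j ∈ Ioo i (n+2) := by
        intro j hj
        simp only [mem_Ioo] at hj ⊢
        rcases eq_or_ne j a with rfl | h1
        · rw [hσa]; omega
        · rcases eq_or_ne j (n+1) with rfl | h2
          · rw [hσn]; omega
          · rw [hσo j h1 h2]; omega
      simp only [hc]
      apply Finset.card_bij' (fun j _ => σ j) (fun j _ => σ j)
      · intro j hj
        simp only [mem_filter] at hj ⊢
        refine ⟨hσmem j hj.1, ?_⟩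
        rw [← hwi', ← hw'app]
        exact hj.2
      · intro j hj
        simp only [mem_filter] at hj ⊢
        refine ⟨hσmem j hj.1, ?_⟩
        rw [hw'app, hσσ, hwi']
        exact hj.2
      · intro j hj
        exact hσσ j
      · intro j hj
        exact hσσ j
    · -- i = a
      subst hia
      have hda : d i = m + 1 := by simp [hd]
      rw [hca', hda]
      omega
    · -- a < i
      rcases Nat.lt_or_ge i (n+1) with hin | hin
      · -- a < i ≤ n
        have hile : i ≤ n := by omega
        have hdi : d i = if w a < w i then 1 else 0 := by
          have h1 : i ≠ a := by omega
          simp only [hd]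
          rw [if_neg h1, if_pos ⟨hia, hile⟩]
        have hwi' : w' i = w i := hw'o i (by omega) (by omega)
        have hsplit : (Ioo i (n+2) : Finset ℕ) = insert (n+1) (Ioc i n) := by
          ext j
          simp only [mem_Ioo, mem_insert, mem_Ioc]
          omega
        have hfw : ((Ioc i n).filter (fun j => w' j < w i))
            = (Ioc i n).filter (fun j => w j < w i) := by
          apply Finset.filter_congr
          intro j hj
          simp only [mem_Ioc] at hj
          rw [hw'o j (by omega) (by omega)]
        simp only [hc, hsplit, filter_insert, hw'n, hwi', hfix (n+1) (by omega)]
        have hwin : ¬ (n+1 < w i) := by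
          have := hwle i hile
          omega
        rw [if_neg hwin, hfw, hdi]
        by_cases hcase : w a < w i
        · rw [if_pos hcase, if_pos hcase,
            card_insert_of_notMem (by simp)]
        · rw [if_neg hcase, if_neg hcase, Nat.add_zero]
      · -- i = n+1
        have hieq : i = n+1 := by omega
        subst hieq
        have hempty : (Ioo (n+1) (n+2) : Finset ℕ) = ∅ := by
          ext j
          simp only [mem_Ioo, Finset.notMem_empty, iff_false]
          omega
        have hdi : d (n+1) = 0 := by
          simp only [hd]
          split_ifs <;> omega
        simp [hc, hempty, hdi]
  have hdsum : ∑ i ∈ range (n+2), d i = m + 1 + m := by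
    rw [← Finset.sum_subset (s₁ := Icc a n)
      (by intro x hx; simp only [mem_Icc, mem_range] at *; omega)
      (by
        intro x hx hnx
        simp only [mem_range] at hx
        simp only [mem_Icc, not_and, not_le] at hnx
        simp only [hd]
        split_ifs with h1 h2 <;> omega)]
    rw [Finset.Icc_eq_cons_Ioc han, Finset.sum_cons]
    have h1 : d a = m + 1 := by simp [hd]
    have h2 : ∑ i ∈ Ioc a n, d i = m := by
      rw [hm, card_filter]
      apply Finset.sum_congr rfl
      intro j hj
      simp only [mem_Ioc] at hj
      have hne : j ≠ a := by omega
      simp only [hd]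
      rw [if_neg hne, if_pos ⟨hj.1, hj.2⟩]
    rw [h1, h2]
  have hA := invNum_eq_card w' (n+1) hfix'
  have hB := invNum_eq_card w (n+1) (fun j hj => hfix j (by omega))
  rw [hsum w'] at hA
  rw [hsum w] at hB
  have hmain : invNum w' = invNum w + 1 + 2 * m := by
    rw [hA, hB, Finset.sum_congr rfl hpt, Finset.sum_add_distrib, hdsum]
    omega
  have hiff : m = 0 ↔ ∀ i, a ≤ i → i ≤ n → w i ≤ w a := by
    rw [hm, Finset.card_eq_zero, Finset.filter_eq_empty_iff]
    constructor
    · intro h i hai hin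
      rcases eq_or_lt_of_le hai with rfl | hlt
      · exact le_refl _
      · have := h (mem_Ioc.mpr ⟨hlt, hin⟩)
        omega
    · intro h j hj
      rw [mem_Ioc] at hj
      have := h j (le_of_lt hj.1) hj.2
      omega
  rw [hmain, ← hiff]
  omega
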